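/- arXiv:math/0406363 — 2 statements merged into one kernel-verified Lean document; each statement's English description precedes it below -/
import Mathlib

section
/- Let p be a prime, and for each r ≥ 0 suppose c_r = (c_{r,i}) is a sequence of rationals with c_{r,i} ∈ p^{-δ_p(r)}Z_(p) for i < r, c_{r,r} ∈ p^{-δ_p(r)}Z_(p)^×, and c_{r,i} = 0 for i > r. Let n ≥ 0 and suppose μ = (μ_i) ∈ Π_{i≥0} Z_(p) satisfies c_r·μ ∈ Z_(p) for 0 ≤ r ≤ n. Then there exists μ' ∈ Π_{i≥0} Z_(p) with μ'_i = μ_i for 0 ≤ i ≤ n and c_r·μ' ∈ Z_(p) for all r ≥ 0. -/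
/-- `x ∈ ℤ_(p)` : a rational is a `p`-local integer iff `p` does not divide its denominator. -/
def inZLoc (p : ℕ) (x : ℚ) : Prop := ¬ (p ∣ x.den)

/-- `x` is a unit of `ℤ_(p)` : `p` divides neither numerator nor denominator. -/
def isUnitZLoc (p : ℕ) (x : ℚ) : Prop := inZLoc p x ∧ ¬ ((p : ℤ) ∣ x.num)

/-- `δ_p(n) = n + ν_p(n!)`. -/
def deltaP (p n : ℕ) : ℕ := n + (n.factorial).factorization p

section helpers
variable {p : ℕ}

lemma inZLoc_zero (hp : p.Prime) : inZLoc p 0 := by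
  simpa [inZLoc, Nat.dvd_one] using Nat.Prime.ne_one hp

lemma inZLoc_mul (hp : p.Prime) {x y : ℚ} (hx : inZLoc p x) (hy : inZLoc p y) : inZLoc p (x * y) := by
  intro h
  rcases (Nat.Prime.dvd_mul hp).1 (h.trans (Rat.mul_den_dvd x y)) with h' | h'
  exacts [hx h', hy h']

lemma inZLoc_add (hp : p.Prime) {x y : ℚ} (hx : inZLoc p x) (hy : inZLoc p y) : inZLoc p (x + y) := by
  intro h
  rcases (Nat.Prime.dvd_mul hp).1 (h.trans (Rat.add_den_dvd x y)) with h' | h'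
  exacts [hx h', hy h']

lemma inZLoc_neg {x : ℚ} (hx : inZLoc p x) : inZLoc p (-x) := by
  simpa [inZLoc] using hx

lemma inZLoc_sum (hp : p.Prime) {s : Finset ℕ} {f : ℕ → ℚ} (hf : ∀ i ∈ s, inZLoc p (f i)) :
    inZLoc p (∑ i ∈ s, f i) := by
  classical
  induction s using Finset.induction with
  | empty => simpa using inZLoc_zero hp
  | @insert a s h ih =>
      rw [Finset.sum_insert h]
      exact inZLoc_add hp (hf _ (Finset.mem_insert_self _ _))
        (ih fun i hi => hf i (Finset.mem_insert_of_mem hi))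

lemma inZLoc_inv {x : ℚ} (hx : ¬ ((p : ℤ) ∣ x.num)) : inZLoc p x⁻¹ := by
  have hx0 : x ≠ 0 := by
    rintro rfl; exact hx (by simp)
  have h : x⁻¹ = (x.den : ℚ) * ((x.num : ℚ))⁻¹ := by
    conv_lhs => rw [← Rat.num_div_den x, inv_div, div_eq_mul_inv]
  intro hd
  rw [h] at hd
  have hdvd := hd.trans (Rat.mul_den_dvd _ _)
  rw [Rat.den_natCast, one_mul, Rat.inv_intCast_den,
    if_neg (Rat.num_ne_zero.2 hx0)] at hdvd
  exact hx (Int.dvd_natAbs.1 (Int.natCast_dvd_natCast.2 hdvd))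

end helpers

noncomputable def muExt (c : ℕ → ℕ → ℚ) (n : ℕ) (μ : ℕ → ℚ) : ℕ → ℚ
  | i => if i ≤ n then μ i else
      -(∑ j ∈ (Finset.range i).attach, c i j.1 * muExt c n μ j.1) / c i i
decreasing_by exact Finset.mem_range.mp j.2

lemma muExt_le (c : ℕ → ℕ → ℚ) (n : ℕ) (μ : ℕ → ℚ) {i : ℕ} (h : i ≤ n) :
    muExt c n μ i = μ i := by rw [muExt, if_pos h]

lemma muExt_gt (c : ℕ → ℕ → ℚ) (n : ℕ) (μ : ℕ → ℚ) {i : ℕ} (h : ¬ i ≤ n) :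
    muExt c n μ i = -(∑ j ∈ Finset.range i, c i j * muExt c n μ j) / c i i := by
  rw [muExt, if_neg h, ← Finset.sum_attach (Finset.range i) (fun j => c i j * muExt c n μ j)]

theorem extend_partial_congruence_solution (p : ℕ) (hp : p.Prime)
    (c : ℕ → ℕ → ℚ)
    (hc1 : ∀ r i, i < r → inZLoc p ((p : ℚ) ^ deltaP p r * c r i))
    (hc2 : ∀ r, isUnitZLoc p ((p : ℚ) ^ deltaP p r * c r r))
    (hc3 : ∀ r i, r < i → c r i = 0)
    (n : ℕ) (μ : ℕ → ℚ) (hμ : ∀ i, inZLoc p (μ i))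
    (hcong : ∀ r ≤ n, inZLoc p (∑ i ∈ Finset.range (r + 1), c r i * μ i)) :
    ∃ μ' : ℕ → ℚ, (∀ i, inZLoc p (μ' i)) ∧ (∀ i ≤ n, μ' i = μ i) ∧
      ∀ r, inZLoc p (∑ i ∈ Finset.range (r + 1), c r i * μ' i) := by
  have hp0 : (p : ℚ) ≠ 0 := Nat.cast_ne_zero.2 hp.ne_zero
  have hcrr_ne : ∀ r, c r r ≠ 0 := fun r hr => (hc2 r).2 (by simp [hr])
  -- p-locality of each μ' i
  have hloc : ∀ i, inZLoc p (muExt c n μ i) := by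
    intro i
    induction i using Nat.strong_induction_on with
    | _ i ih =>
      by_cases hi : i ≤ n
      · rw [muExt_le c n μ hi]; exact hμ i
      · rw [muExt_gt c n μ hi]
        set S := ∑ j ∈ Finset.range i, c i j * muExt c n μ j with hS
        have hSloc : inZLoc p ((p : ℚ) ^ deltaP p i * S) := by
          rw [hS, Finset.mul_sum]
          refine inZLoc_sum hp ?_
          intro j hj
          have hj' := Finset.mem_range.mp hj
          have h1 := inZLoc_mul hp (hc1 i j hj') (ih j hj')
          have : (p:ℚ) ^ deltaP p i * (c i j * muExt c n μ j)
              = ((p:ℚ) ^ deltaP p i * c i j) * muExt c n μ j := by ring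
          rw [this]; exact h1
        have key : -S / c i i
            = (-((p : ℚ) ^ deltaP p i * S)) * ((p : ℚ) ^ deltaP p i * c i i)⁻¹ := by
          have hpd : (p : ℚ) ^ deltaP p i ≠ 0 := pow_ne_zero _ hp0
          field_simp [hcrr_ne i]
        rw [key]
        exact inZLoc_mul hp (inZLoc_neg hSloc) (inZLoc_inv ((hc2 i).2))
  refine ⟨muExt c n μ, hloc, fun i hi => muExt_le c n μ hi, ?_⟩
  intro r
  by_cases hr : r ≤ n
  · have : ∑ i ∈ Finset.range (r + 1), c r i * muExt c n μ i
        = ∑ i ∈ Finset.range (r + 1), c r i * μ i := by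
      refine Finset.sum_congr rfl fun i hi => ?_
      rw [muExt_le c n μ (le_trans (Nat.lt_succ_iff.1 (Finset.mem_range.mp hi)) hr)]
    rw [this]; exact hcong r hr
  · rw [Finset.sum_range_succ, muExt_gt c n μ hr,
      mul_div_assoc' (c r r), mul_comm (c r r), mul_div_assoc,
      div_self (hcrr_ne r), mul_one, add_neg_cancel]
    exact inZLoc_zero hp
end

section
/- Let p be an odd prime, q a primitive root mod p^2, and q̂ = q^{p-1}. For every sequence (a_n)_{n≥0} in Z_(p), the sequence μ = (μ_i)_{i≥0} defined by μ_i = Σ_{n=0}^i a_n Π_{k=0}^{n-1} (q̂^i - q̂^k) satisfies, for all n ≥ 0, the congruence Σ_{i=0}^n (-1)^{n-i} q̂^{binom(n-i,2)} [n choose i]_{q̂} μ_i ≡ 0 mod p^{δ_p(n)} in Z_(p). -/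
/-- The Gaussian (q-)binomial coefficient, via the Pascal-type recursion. -/
def gaussBinom {R : Type*} [CommRing R] (t : R) : ℕ → ℕ → R
  | _, 0 => 1
  | 0, _ + 1 => 0
  | n + 1, i + 1 => gaussBinom t n i + t ^ (i + 1) * gaussBinom t n (i + 1)

/-- `q` is a primitive root modulo `m`. -/
def IsPrimitiveRootMod (q : ℤ) (m : ℕ) : Prop :=
  ∃ u : (ZMod m)ˣ, (u : ZMod m) = (q : ZMod m) ∧ ∀ v : (ZMod m)ˣ, v ∈ Subgroup.zpowers u

lemma choose_two_succ (m : ℕ) : (m + 1).choose 2 = m.choose 2 + m := by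
  rw [show (2 : ℕ) = 1 + 1 from rfl, Nat.choose_succ_succ, Nat.choose_one_right]
  simp only [Nat.succ_eq_add_one]
  omega

lemma gaussBinom_zero_right (t : ℚ) (m : ℕ) : gaussBinom t m 0 = 1 := by
  cases m <;> rfl

lemma gaussBinom_eq_zero (t : ℚ) : ∀ n i : ℕ, n < i → gaussBinom t n i = 0 := by
  intro n
  induction n with
  | zero =>
    intro i hi
    match i, hi with
    | i + 1, _ => rfl
  | succ n ih =>
    intro i hi
    match i, hi with
    | i + 1, hi =>
      show gaussBinom t n i + t ^ (i + 1) * gaussBinom t n (i + 1) = 0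
      rw [ih i (by omega), ih (i + 1) (by omega)]
      ring

lemma gaussBinom_diag (t : ℚ) : ∀ n : ℕ, gaussBinom t n n = 1 := by
  intro n
  induction n with
  | zero => rfl
  | succ n ih =>
    show gaussBinom t n n + t ^ (n + 1) * gaussBinom t n (n + 1) = 1
    rw [ih, gaussBinom_eq_zero t n (n + 1) (by omega)]
    ring

lemma gauss_expand (t x : ℚ) (n : ℕ) :
    ∑ i ∈ Finset.range (n + 1),
      (-1 : ℚ) ^ (n - i) * t ^ ((n - i).choose 2) * gaussBinom t n i * x ^ i
      = ∏ k ∈ Finset.range n, (x - t ^ k) := by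
  induction n with
  | zero => simp [gaussBinom]
  | succ n ih =>
    rw [Finset.sum_range_succ']
    have step1 : ∀ i ∈ Finset.range (n + 1),
        (-1 : ℚ) ^ (n + 1 - (i + 1)) * t ^ ((n + 1 - (i + 1)).choose 2) *
            gaussBinom t (n + 1) (i + 1) * x ^ (i + 1)
        = x * ((-1 : ℚ) ^ (n - i) * t ^ ((n - i).choose 2) * gaussBinom t n i * x ^ i)
          + (-1 : ℚ) ^ (n - i) * t ^ ((n - i).choose 2) *
            (t ^ (i + 1) * gaussBinom t n (i + 1)) * x ^ (i + 1) := by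
      intro i hi
      have h1 : n + 1 - (i + 1) = n - i := by omega
      rw [h1]
      show (-1 : ℚ) ^ (n - i) * t ^ ((n - i).choose 2) *
          (gaussBinom t n i + t ^ (i + 1) * gaussBinom t n (i + 1)) * x ^ (i + 1) = _
      ring
    rw [Finset.sum_congr rfl step1, Finset.sum_add_distrib, ← Finset.mul_sum, ih]
    have step2 : ∀ i ∈ Finset.range (n + 1),
        (-1 : ℚ) ^ (n - i) * t ^ ((n - i).choose 2) *
            (t ^ (i + 1) * gaussBinom t n (i + 1)) * x ^ (i + 1)
        = (-t ^ n) * ((-1 : ℚ) ^ (n - (i + 1)) * t ^ ((n - (i + 1)).choose 2) *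
            gaussBinom t n (i + 1) * x ^ (i + 1)) := by
      intro i hi
      rcases Nat.lt_or_ge i n with h | h
      · have hsgn : ((-1 : ℚ)) ^ (n - i) = -(-1 : ℚ) ^ (n - (i + 1)) := by
          rw [show n - i = (n - (i + 1)) + 1 by omega, pow_succ]; ring
        have hpow : t ^ ((n - i).choose 2) * t ^ (i + 1)
            = t ^ n * t ^ ((n - (i + 1)).choose 2) := by
          rw [← pow_add, ← pow_add]
          congr 1
          rw [show n - i = (n - (i + 1)) + 1 by omega, choose_two_succ]
          omega
        calc (-1 : ℚ) ^ (n - i) * t ^ ((n - i).choose 2) *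
              (t ^ (i + 1) * gaussBinom t n (i + 1)) * x ^ (i + 1)
            = ((-1 : ℚ) ^ (n - i)) * (t ^ ((n - i).choose 2) * t ^ (i + 1)) *
              gaussBinom t n (i + 1) * x ^ (i + 1) := by ring
          _ = (-(-1 : ℚ) ^ (n - (i + 1))) * (t ^ n * t ^ ((n - (i + 1)).choose 2)) *
              gaussBinom t n (i + 1) * x ^ (i + 1) := by rw [hsgn, hpow]
          _ = _ := by ring
      · have hi' := Finset.mem_range.mp hi
        have hin : i = n := by omega
        subst hin
        rw [gaussBinom_eq_zero t i (i + 1) (by omega)]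
        ring
    rw [Finset.sum_congr rfl step2, ← Finset.mul_sum]
    have hF0 : (-1 : ℚ) ^ (n + 1 - 0) * t ^ ((n + 1 - 0).choose 2) *
        gaussBinom t (n + 1) 0 * x ^ 0
        = (-t ^ n) * ((-1 : ℚ) ^ (n - 0) * t ^ ((n - 0).choose 2) *
            gaussBinom t n 0 * x ^ 0) := by
      simp only [Nat.sub_zero, gaussBinom_zero_right, choose_two_succ, pow_add, pow_succ]
      ring
    rw [hF0]
    have hKsum : ∑ j ∈ Finset.range (n + 2),
        ((-1 : ℚ) ^ (n - j) * t ^ ((n - j).choose 2) * gaussBinom t n j * x ^ j)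
        = (∑ i ∈ Finset.range (n + 1),
            ((-1 : ℚ) ^ (n - (i + 1)) * t ^ ((n - (i + 1)).choose 2) *
              gaussBinom t n (i + 1) * x ^ (i + 1)))
          + (-1 : ℚ) ^ (n - 0) * t ^ ((n - 0).choose 2) * gaussBinom t n 0 * x ^ 0 :=
      Finset.sum_range_succ' _ (n + 1)
    have hsum : (-t ^ n) * (∑ i ∈ Finset.range (n + 1),
        ((-1 : ℚ) ^ (n - (i + 1)) * t ^ ((n - (i + 1)).choose 2) *
          gaussBinom t n (i + 1) * x ^ (i + 1)))
        + (-t ^ n) * ((-1 : ℚ) ^ (n - 0) * t ^ ((n - 0).choose 2) *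
            gaussBinom t n 0 * x ^ 0)
        = (-t ^ n) * ∏ k ∈ Finset.range n, (x - t ^ k) := by
      rw [← mul_add, ← hKsum, Finset.sum_range_succ,
        gaussBinom_eq_zero t n (n + 1) (by omega), mul_zero, zero_mul, add_zero, ih]
    rw [add_assoc, hsum, Finset.prod_range_succ]
    ring

lemma swap_helper {s1 s2 : Finset ℕ} (F G : ℕ → ℚ) (X : ℕ → ℕ → ℚ) :
    ∑ i ∈ s1, F i * ∑ j ∈ s2, G j * X i j = ∑ j ∈ s2, G j * ∑ i ∈ s1, F i * X i j := by
  simp only [Finset.mul_sum]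
  rw [Finset.sum_comm]
  exact Finset.sum_congr rfl fun j _ => Finset.sum_congr rfl fun i _ => by ring

lemma main_id (t : ℚ) (n : ℕ) (a μ : ℕ → ℚ)
    (hμ : ∀ i, μ i = ∑ m ∈ Finset.range (i + 1),
      a m * ∏ k ∈ Finset.range m, (t ^ i - t ^ k)) :
    ∑ i ∈ Finset.range (n + 1),
      (-1 : ℚ) ^ (n - i) * t ^ ((n - i).choose 2) * gaussBinom t n i * μ i
      = a n * ∏ k ∈ Finset.range n, (t ^ n - t ^ k) := by
  have hzero : ∀ m i : ℕ, i < m → (∏ k ∈ Finset.range m, (t ^ i - t ^ k)) = 0 :=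
    fun m i h => Finset.prod_eq_zero (Finset.mem_range.mpr h) (sub_self _)
  have step1 : ∀ i ∈ Finset.range (n + 1),
      (-1 : ℚ) ^ (n - i) * t ^ ((n - i).choose 2) * gaussBinom t n i * μ i
      = ∑ m ∈ Finset.range (n + 1),
          ((-1 : ℚ) ^ (n - i) * t ^ ((n - i).choose 2) * gaussBinom t n i) *
            (a m * ∏ k ∈ Finset.range m, (t ^ i - t ^ k)) := by
    intro i hi
    rw [hμ i, Finset.mul_sum]
    refine Finset.sum_subset (Finset.range_subset_range.mpr (by
      have := Finset.mem_range.mp hi; omega)) (fun m hm hmn => ?_)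
    have h1 : i < m := by
      have := Finset.mem_range.mp hm
      simp only [Finset.mem_range] at hmn
      omega
    rw [hzero m i h1, mul_zero, mul_zero]
  rw [Finset.sum_congr rfl step1, Finset.sum_comm]
  have inner : ∀ m ∈ Finset.range (n + 1),
      (∑ i ∈ Finset.range (n + 1),
        ((-1 : ℚ) ^ (n - i) * t ^ ((n - i).choose 2) * gaussBinom t n i) *
          (a m * ∏ k ∈ Finset.range m, (t ^ i - t ^ k)))
      = if m = n then a n * ∏ k ∈ Finset.range n, (t ^ n - t ^ k) else 0 := by
    intro m hm
    have hm' : m ≤ n := by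
      have := Finset.mem_range.mp hm; omega
    have e1 : ∀ i : ℕ, a m * ∏ k ∈ Finset.range m, (t ^ i - t ^ k)
        = ∑ j ∈ Finset.range (m + 1),
            (a m * ((-1 : ℚ) ^ (m - j) * t ^ ((m - j).choose 2) * gaussBinom t m j)) *
              (t ^ j) ^ i := by
      intro i
      rw [← gauss_expand t (t ^ i) m, Finset.mul_sum]
      refine Finset.sum_congr rfl fun j _ => ?_
      have hswap : ((t : ℚ) ^ i) ^ j = (t ^ j) ^ i := by
        rw [← pow_mul, ← pow_mul, Nat.mul_comm]
      rw [← hswap]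
      ring
    rw [Finset.sum_congr rfl (fun i _ => by rw [e1 i]), swap_helper]
    have e2 : ∀ j ∈ Finset.range (m + 1),
        (a m * ((-1 : ℚ) ^ (m - j) * t ^ ((m - j).choose 2) * gaussBinom t m j)) *
          (∑ i ∈ Finset.range (n + 1),
            ((-1 : ℚ) ^ (n - i) * t ^ ((n - i).choose 2) * gaussBinom t n i) * (t ^ j) ^ i)
        = (a m * ((-1 : ℚ) ^ (m - j) * t ^ ((m - j).choose 2) * gaussBinom t m j)) *
          ∏ k ∈ Finset.range n, (t ^ j - t ^ k) := by
      intro j _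
      congr 1
      rw [← gauss_expand t (t ^ j) n]
    rw [Finset.sum_congr rfl e2]
    by_cases hmn : m = n
    · subst hmn
      rw [if_pos rfl]
      rw [Finset.sum_eq_single_of_mem m (Finset.self_mem_range_succ m)
        (fun j hj hjn => by
          rw [hzero m j (by
            have := Finset.mem_range.mp hj; omega), mul_zero])]
      rw [Nat.sub_self, gaussBinom_diag]
      norm_num
    · rw [if_neg hmn]
      refine Finset.sum_eq_zero fun j hj => ?_
      rw [hzero n j (by
        have := Finset.mem_range.mp hj; omega), mul_zero]
  rw [Finset.sum_congr rfl inner, Finset.sum_ite_eq' (Finset.range (n + 1)) n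
    (fun _ => a n * ∏ k ∈ Finset.range n, (t ^ n - t ^ k))]
  rw [if_pos (Finset.self_mem_range_succ n)]

lemma fact_fac (p n : ℕ) :
    (n.factorial).factorization p = ∑ k ∈ Finset.range n, (k + 1).factorization p := by
  induction n with
  | zero => simp
  | succ n ih =>
    rw [Finset.sum_range_succ, ← ih, Nat.factorial_succ,
      Nat.factorization_mul (Nat.succ_ne_zero n) (Nat.factorial_ne_zero n)]
    simp [add_comm]

lemma lte_step (p : ℕ) (hp : p.Prime) (hodd : Odd p) (Q : ℤ)
    (hQ1 : (p : ℤ) ∣ Q - 1) (hQ : ¬ (p : ℤ) ∣ Q) (j : ℕ) (hj : 0 < j) :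
    (p : ℤ) ^ (1 + j.factorization p) ∣ Q ^ j - 1 := by
  have h1 : Q ^ j - 1 = Q ^ j - 1 ^ j := by rw [one_pow]
  rw [h1]
  apply pow_dvd_of_le_emultiplicity
  rw [Int.emultiplicity_pow_sub_pow hp hodd (by simpa using hQ1) hQ j]
  rw [Nat.cast_add]
  apply add_le_add
  · rw [Nat.cast_one]
    exact le_emultiplicity_of_pow_dvd (by simpa using hQ1)
  · have hfin : FiniteMultiplicity p j := Nat.finiteMultiplicity_iff.mpr ⟨hp.ne_one, hj⟩
    rw [hfin.emultiplicity_eq_multiplicity, Nat.multiplicity_eq_factorization hp hj.ne']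

lemma key_dvd (p : ℕ) (hp : p.Prime) (hodd : Odd p) (Q : ℤ)
    (hQ1 : (p : ℤ) ∣ Q - 1) (hQ : ¬ (p : ℤ) ∣ Q) (n : ℕ) :
    (p : ℤ) ^ (deltaP p n) ∣ ∏ k ∈ Finset.range n, (Q ^ n - Q ^ k) := by
  have hfact : ∀ k ∈ Finset.range n, Q ^ n - Q ^ k = Q ^ k * (Q ^ (n - k) - 1) := by
    intro k hk
    have hk' := Finset.mem_range.mp hk
    have he : k + (n - k) = n := by omega
    rw [mul_sub, mul_one, ← pow_add, he]
  rw [Finset.prod_congr rfl hfact, Finset.prod_mul_distrib]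
  have hδ : deltaP p n = ∑ k ∈ Finset.range n, (1 + (n - k).factorization p) := by
    rw [Finset.sum_add_distrib, Finset.sum_const, Finset.card_range, smul_eq_mul, mul_one]
    unfold deltaP
    congr 1
    rw [fact_fac p n, ← Finset.sum_range_reflect (fun k => (n - k).factorization p) n]
    refine Finset.sum_congr rfl fun k hk => ?_
    have hk' := Finset.mem_range.mp hk
    have he2 : n - (n - 1 - k) = k + 1 := by omega
    rw [he2]
  rw [hδ, ← Finset.prod_pow_eq_pow_sum]
  refine dvd_mul_of_dvd_right (Finset.prod_dvd_prod_of_dvd _ _ fun k hk => ?_) _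
  exact lte_step p hp hodd Q hQ1 hQ (n - k) (by
    have := Finset.mem_range.mp hk; omega)

theorem adams_sums_satisfy_congruences (p : ℕ) (hp : p.Prime) (hodd : Odd p)
    (q : ℤ) (hq : IsPrimitiveRootMod q (p ^ 2))
    (qh : ℚ) (hqh : qh = (q : ℚ) ^ (p - 1))
    (a : ℕ → ℚ) (ha : ∀ n, inZLoc p (a n))
    (μ : ℕ → ℚ)
    (hμ : ∀ i, μ i = ∑ n ∈ Finset.range (i + 1),
        a n * ∏ k ∈ Finset.range n, (qh ^ i - qh ^ k)) :
    ∀ n, inZLoc p ((∑ i ∈ Finset.range (n + 1),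
        (-1) ^ (n - i) * qh ^ Nat.choose (n - i) 2 * gaussBinom qh n i * μ i) /
      (p : ℚ) ^ deltaP p n) := by
  haveI : Fact p.Prime := ⟨hp⟩
  obtain ⟨u, hu, -⟩ := hq
  have hpq : ¬ (p : ℤ) ∣ q := by
    intro hdvd
    have h0 : ((q : ZMod p)) = 0 := by rwa [ZMod.intCast_zmod_eq_zero_iff_dvd]
    have hunit : IsUnit ((q : ℤ) : ZMod (p ^ 2)) := hu ▸ u.isUnit
    have hunit' : IsUnit ((q : ℤ) : ZMod p) := by
      have h2 := hunit.map (ZMod.castHom (dvd_pow_self p two_ne_zero) (ZMod p))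
      rwa [map_intCast] at h2
    rw [h0] at hunit'
    exact not_isUnit_zero hunit'
  have hq0 : (q : ZMod p) ≠ 0 := fun h => hpq ((ZMod.intCast_zmod_eq_zero_iff_dvd q p).mp h)
  set Q : ℤ := q ^ (p - 1) with hQdef
  have hQ1 : (p : ℤ) ∣ Q - 1 := by
    rw [← ZMod.intCast_zmod_eq_zero_iff_dvd, hQdef]
    push_cast
    rw [ZMod.pow_card_sub_one_eq_one hq0]
    ring
  have hQdvd : ¬ (p : ℤ) ∣ Q := fun h =>
    hpq ((Nat.prime_iff_prime_int.mp hp).dvd_of_dvd_pow h)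
  intro n
  rw [main_id qh n a μ hμ]
  have hqhQ : qh = (Q : ℚ) := by rw [hqh, hQdef]; push_cast; ring
  have hcast : (∏ k ∈ Finset.range n, (qh ^ n - qh ^ k))
      = ((∏ k ∈ Finset.range n, (Q ^ n - Q ^ k) : ℤ) : ℚ) := by
    rw [hqhQ]; push_cast; ring
  obtain ⟨c, hc⟩ := key_dvd p hp hodd Q hQ1 hQdvd n
  rw [hcast, hc]
  have hpne : ((p : ℚ)) ^ (deltaP p n) ≠ 0 :=
    pow_ne_zero _ (Nat.cast_ne_zero.mpr hp.pos.ne')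
  have hdiv : (a n * ((((p : ℤ)) ^ (deltaP p n) * c : ℤ) : ℚ)) / (p : ℚ) ^ (deltaP p n)
      = a n * (c : ℚ) := by
    push_cast
    field_simp
  rw [hdiv]
  intro h
  apply ha n
  have h2 : (a n * (c : ℚ)).den ∣ (a n).den * ((c : ℚ)).den := Rat.mul_den_dvd _ _
  rw [Rat.den_intCast, mul_one] at h2
  exact h.trans h2
end
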